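/- Let N be a self-adjoint continuous linear operator on a complex Hilbert space H with ‖N‖ ≤ 1, and let E be the orthogonal projection onto the closed subspace ker(I − N²). Then for every x ∈ H the odd powers N^{2k+1} x converge in norm to N(E x) as k → ∞, and the sequence of norms ‖N^{2k+1} x‖ is monotonically nonincreasing with limit ‖E x‖ (in particular ‖N(E x)‖ = ‖E x‖). -/

import Mathlib

open Filter

open scoped InnerProductSpace ComplexConjugate

/-- Let `N` be self-adjoint with `‖N‖ ≤ 1` on a complex Hilbert space,
and let `E` be the orthogonal projection onto `ker (I − N²)`. Then for every `x`, the odd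
powers `N^(2k+1) x` converge in norm to `N (E x)`, the norms `‖N^(2k+1) x‖` are
monotonically nonincreasing with limit `‖E x‖`, and `‖N (E x)‖ = ‖E x‖`. -/
theorem stmt10 {H : Type*} [NormedAddCommGroup H] [InnerProductSpace ℂ H] [CompleteSpace H]
    (N : H →L[ℂ] H) (hN : IsSelfAdjoint N) (hNnorm : ‖N‖ ≤ 1)
    (E : H →L[ℂ] H) (hE : IsSelfAdjoint E) (hE2 : E ∘L E = E)
    (hErange : LinearMap.range (E : H →ₗ[ℂ] H) = LinearMap.ker (((1 : H →L[ℂ] H) - N ∘L N : H →L[ℂ] H) : H →ₗ[ℂ] H)) :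
    ∀ x : H,
      Tendsto (fun k : ℕ => (N ^ (2 * k + 1)) x) atTop (nhds (N (E x))) ∧
      Antitone (fun k : ℕ => ‖(N ^ (2 * k + 1)) x‖) ∧
      Tendsto (fun k : ℕ => ‖(N ^ (2 * k + 1)) x‖) atTop (nhds ‖E x‖) ∧
      ‖N (E x)‖ = ‖E x‖ := by
  intro x
  have hsym : ∀ (j : ℕ) (u v : H), ⟪(N ^ j) u, v⟫_ℂ = ⟪u, (N ^ j) v⟫_ℂ :=
    fun j u v => (hN.pow j).isSymmetric u v
  set a : ℕ → ℝ := fun j => ‖(N ^ j) x‖ with ha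
  have hpow : ∀ (j : ℕ) (u : H), (N ^ (j + 1)) u = N ((N ^ j) u) := by
    intro j u
    rw [pow_succ']; rfl
  have ha_anti : Antitone a := by
    apply antitone_nat_of_succ_le
    intro j
    have : a (j + 1) = ‖N ((N ^ j) x)‖ := by simp only [ha, hpow]
    calc a (j + 1) = ‖N ((N ^ j) x)‖ := this
      _ ≤ ‖N‖ * ‖(N ^ j) x‖ := N.le_opNorm _
      _ ≤ 1 * ‖(N ^ j) x‖ := by
          apply mul_le_mul_of_nonneg_right hNnorm (norm_nonneg _)
      _ = a j := one_mul _
  have ha_sq_anti : Antitone (fun j => (a j) ^ 2) := by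
    intro i j hij
    exact pow_le_pow_left₀ (norm_nonneg _) (ha_anti hij) 2
  have hcomp : ∀ (p q : ℕ) (u : H), (N ^ p) ((N ^ q) u) = (N ^ (p + q)) u := by
    intro p q u
    rw [← ContinuousLinearMap.mul_apply, ← pow_add]
  have hinner : ∀ i j : ℕ, ⟪(N ^ (2 * i)) x, (N ^ (2 * j)) x⟫_ℂ = ((a (i + j)) ^ 2 : ℝ) := by
    intro i j
    rw [hsym (2 * i), hcomp]
    have h2 : 2 * i + (2 * j) = (i + j) + (i + j) := by ring
    rw [h2, ← hcomp (i + j) (i + j)]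
    rw [← hsym (i + j)]
    rw [inner_self_eq_norm_sq_to_K]
    norm_cast
  have hdist : ∀ k m : ℕ, ‖(N ^ (2 * k)) x - (N ^ (2 * m)) x‖ ^ 2
      = a (2 * k) ^ 2 - 2 * a (k + m) ^ 2 + a (2 * m) ^ 2 := by
    intro k m
    rw [@norm_sub_sq ℂ]
    have h1 : RCLike.re ⟪(N ^ (2 * k)) x, (N ^ (2 * m)) x⟫_ℂ = a (k + m) ^ 2 := by
      rw [hinner k m]
      exact RCLike.ofReal_re _
    rw [h1]
  -- the limit of the squared norms
  set L : ℝ := ⨅ j, (a j) ^ 2 with hL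
  have hbdd : BddBelow (Set.range fun j => (a j) ^ 2) := by
    refine ⟨0, ?_⟩
    rintro r ⟨j, rfl⟩
    positivity
  have hLle : ∀ j, L ≤ (a j) ^ 2 := fun j => ciInf_le hbdd j
  have hLtend : Tendsto (fun j => (a j) ^ 2) atTop (nhds L) :=
    tendsto_atTop_ciInf ha_sq_anti hbdd
  -- the Cauchy bound
  set b : ℕ → ℝ := fun K => Real.sqrt (a (2 * K) ^ 2 - L) with hb
  have hbtend : Tendsto b atTop (nhds 0) := by
    have h2 : Tendsto (fun K => a (2 * K) ^ 2) atTop (nhds L) := by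
      apply hLtend.comp
      exact tendsto_atTop_atTop_of_monotone (fun i j hij => by omega) (fun n => ⟨n, by omega⟩)
    have h3 : Tendsto (fun K => a (2 * K) ^ 2 - L) atTop (nhds 0) := by
      have := h2.sub (tendsto_const_nhds (x := L) (f := atTop (α := ℕ)))
      simpa using this
    have h4 : Tendsto Real.sqrt (nhds 0) (nhds 0) := by
      simpa using Real.continuous_sqrt.tendsto 0
    exact h4.comp h3
  have hbound : ∀ k m K : ℕ, K ≤ k → K ≤ m →
      dist ((N ^ (2 * k)) x) ((N ^ (2 * m)) x) ≤ b K := by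
    have key : ∀ k m K : ℕ, K ≤ k → k ≤ m →
        dist ((N ^ (2 * k)) x) ((N ^ (2 * m)) x) ≤ b K := by
      intro k m K hK hkm
      rw [dist_eq_norm]
      have h1 : ‖(N ^ (2 * k)) x - (N ^ (2 * m)) x‖ ^ 2 ≤ a (2 * K) ^ 2 - L := by
        rw [hdist k m]
        have e1 : a (2 * m) ^ 2 ≤ a (k + m) ^ 2 := ha_sq_anti (by omega)
        have e2 : a (2 * k) ^ 2 ≤ a (2 * K) ^ 2 := ha_sq_anti (by omega)
        have e3 : L ≤ a (2 * m) ^ 2 := hLle _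
        linarith
      have h2 : ‖(N ^ (2 * k)) x - (N ^ (2 * m)) x‖
          = Real.sqrt (‖(N ^ (2 * k)) x - (N ^ (2 * m)) x‖ ^ 2) := by
        rw [Real.sqrt_sq (norm_nonneg _)]
      rw [h2, hb]
      exact Real.sqrt_le_sqrt h1
    intro k m K hk hm
    rcases le_total k m with h | h
    · exact key k m K hk h
    · rw [dist_comm]
      exact key m k K hm h
  have hcauchy : CauchySeq (fun k : ℕ => (N ^ (2 * k)) x) :=
    cauchySeq_of_le_tendsto_0 b (fun n m K hn hm => hbound n m K hn hm) hbtend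
  obtain ⟨y, hy⟩ := cauchySeq_tendsto_of_complete hcauchy
  -- y is fixed by N ∘ N
  have hNNy : N (N y) = y := by
    have h1 : Tendsto (fun k : ℕ => (N ^ (2 * (k + 1))) x) atTop (nhds y) :=
      hy.comp (tendsto_add_atTop_nat 1)
    have h2 : Tendsto (fun k : ℕ => N (N ((N ^ (2 * k)) x))) atTop (nhds (N (N y))) := by
      exact ((N.continuous.tendsto _).comp ((N.continuous.tendsto _).comp hy))
    have h3 : (fun k : ℕ => (N ^ (2 * (k + 1))) x) = fun k : ℕ => N (N ((N ^ (2 * k)) x)) := by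
      funext k
      have : 2 * (k + 1) = (2 * k + 1) + 1 := by ring
      rw [this, hpow, hpow]
    rw [h3] at h1
    exact tendsto_nhds_unique h2 h1
  -- y is in the range of E, hence E y = y
  have hyE : y ∈ LinearMap.range (E : H →ₗ[ℂ] H) := by
    rw [hErange, LinearMap.mem_ker]
    show ((1 : H →L[ℂ] H) - N ∘L N) y = 0
    rw [ContinuousLinearMap.sub_apply, ContinuousLinearMap.one_apply,
      ContinuousLinearMap.comp_apply, hNNy, sub_self]
  have hEy : E y = y := by
    obtain ⟨z, hz⟩ := hyE
    have h : E (E z) = E z := by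
      have := congrArg (fun f : H →L[ℂ] H => f z) hE2
      simpa [ContinuousLinearMap.comp_apply] using this
    rw [← hz]
    exact h
  -- E commutes off: E ∘ (N∘N) = E
  have hME : (N ∘L N) ∘L E = E := by
    ext v
    have hEv : E v ∈ LinearMap.range (E : H →ₗ[ℂ] H) := ⟨v, rfl⟩
    rw [hErange, LinearMap.mem_ker] at hEv
    have : ((1 : H →L[ℂ] H) - N ∘L N) (E v) = 0 := hEv
    rw [ContinuousLinearMap.sub_apply, sub_eq_zero, ContinuousLinearMap.one_apply] at this
    simpa [ContinuousLinearMap.comp_apply] using this.symm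
  have hEM : E ∘L (N ∘L N) = E := by
    have h1 : star ((N * N) * E) = star E := congrArg star hME
    rw [star_mul, star_mul, hN.star_eq, hE.star_eq] at h1
    exact h1
  have hEfk : ∀ k : ℕ, E ((N ^ (2 * k)) x) = E x := by
    intro k
    induction k with
    | zero => simp
    | succ n ih =>
      have h3 : 2 * (n + 1) = (2 * n + 1) + 1 := by ring
      rw [h3, hpow, hpow]
      have : E (N (N ((N ^ (2 * n)) x))) = (E ∘L (N ∘L N)) ((N ^ (2 * n)) x) := by
        simp [ContinuousLinearMap.comp_apply]
      rw [this, hEM, ih]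
  have hExy : E x = y := by
    have h1 : Tendsto (fun k : ℕ => E ((N ^ (2 * k)) x)) atTop (nhds (E y)) :=
      (E.continuous.tendsto _).comp hy
    have h2 : (fun k : ℕ => E ((N ^ (2 * k)) x)) = fun _ : ℕ => E x := by
      funext k; rw [hEfk]
    rw [h2] at h1
    have h3 : E x = E y := tendsto_nhds_unique tendsto_const_nhds h1
    rw [h3, hEy]
  -- part 1
  have part1 : Tendsto (fun k : ℕ => (N ^ (2 * k + 1)) x) atTop (nhds (N (E x))) := by
    have h1 : (fun k : ℕ => (N ^ (2 * k + 1)) x) = fun k : ℕ => N ((N ^ (2 * k)) x) := by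
      funext k; rw [hpow]
    rw [h1, hExy]
    exact (N.continuous.tendsto _).comp hy
  -- part 4
  have hNNEx : N (N (E x)) = E x := by
    have : ((N ∘L N) ∘L E) x = E x := by rw [hME]
    simpa [ContinuousLinearMap.comp_apply] using this
  have part4 : ‖N (E x)‖ = ‖E x‖ := by
    have h1 : (‖N (E x)‖ ^ 2 : ℝ) = ‖E x‖ ^ 2 := by
      have e1 : ⟪N (E x), N (E x)⟫_ℂ = ⟪E x, E x⟫_ℂ := by
        have := hsym 1 (E x) (N (E x))
        simp only [pow_one] at this
        rw [this]
        rw [hNNEx]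
      have e2 := congrArg RCLike.re e1
      rwa [@inner_self_eq_norm_sq ℂ, @inner_self_eq_norm_sq ℂ] at e2
    have := congrArg Real.sqrt h1
    rwa [Real.sqrt_sq (norm_nonneg _), Real.sqrt_sq (norm_nonneg _)] at this
  -- part 2
  have part2 : Antitone (fun k : ℕ => ‖(N ^ (2 * k + 1)) x‖) := by
    have : (fun k : ℕ => ‖(N ^ (2 * k + 1)) x‖) = a ∘ (fun k => 2 * k + 1) := rfl
    rw [this]
    exact ha_anti.comp_monotone (fun i j hij => by omega)
  -- part 3
  have part3 : Tendsto (fun k : ℕ => ‖(N ^ (2 * k + 1)) x‖) atTop (nhds ‖E x‖) := by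
    rw [← part4]
    exact (continuous_norm.tendsto _).comp part1
  exact ⟨part1, part2, part3, part4⟩
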